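/- Let λ > 0 and let η : [0,∞) → ℝ be twice continuously differentiable with η(0) = 0, η'(0) = 1, and (1/2)η''(x) − q(x)η'(x) = −λη(x) for all x ≥ 0. If η is strictly increasing on [0,∞), then the function z ↦ η(z) e^{−Q(z)} is integrable on (0,∞) and ∫₀^∞ η(z) e^{−Q(z)} dz ≤ 1/(2λ). -/

import Mathlib

open MeasureTheory Set

/-- With `λ > 0` and `η` as in STATEMENT 0, if `η` is strictly
increasing on `[0,∞)`, then `z ↦ η z * exp (-(Q z))` is integrable on `(0,∞)`
and `∫₀^∞ η z * exp (-(Q z)) dz ≤ 1/(2λ)`. -/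
theorem stmt_4 (q Q : ℝ → ℝ) (hq : ContDiffOn ℝ 1 q (Ici 0))
    (hQ : ∀ y, Q y = ∫ t in (0:ℝ)..y, 2 * q t)
    (lam : ℝ) (hlam : 0 < lam) (η η' η'' : ℝ → ℝ)
    (hη' : ∀ x ∈ Ici (0:ℝ), HasDerivWithinAt η (η' x) (Ici 0) x)
    (hη'' : ∀ x ∈ Ici (0:ℝ), HasDerivWithinAt η' (η'' x) (Ici 0) x)
    (hη''c : ContinuousOn η'' (Ici 0))
    (hη0 : η 0 = 0) (hη'0 : η' 0 = 1)
    (hode : ∀ x ≥ (0:ℝ), (1/2) * η'' x - q x * η' x = -lam * η x)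
    (hmono : StrictMonoOn η (Ici 0)) :
    IntegrableOn (fun z => η z * Real.exp (-(Q z))) (Ioi 0) ∧
      ∫ z in Ioi (0:ℝ), η z * Real.exp (-(Q z)) ≤ 1 / (2 * lam) := by
  have hQfun : Q = fun y => ∫ t in (0:ℝ)..y, 2 * q t := funext hQ
  have hcq : ContinuousOn (fun t => 2 * q t) (Ici 0) :=
    (hq.continuousOn).const_smul (2:ℝ)
  have hint2q : ∀ x : ℝ, 0 ≤ x → IntervalIntegrable (fun t => 2 * q t) volume 0 x := by
    intro x hx
    apply ContinuousOn.intervalIntegrable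
    refine hcq.mono ?_
    rw [uIcc_of_le hx]
    exact Icc_subset_Ici_self
  -- derivative of Q within Ici 0
  have hQd : ∀ x ∈ Ici (0:ℝ), HasDerivWithinAt Q (2 * q x) (Ici 0) x := by
    intro x hx
    rcases eq_or_lt_of_le (mem_Ici.mp hx) with h0 | h0
    · subst h0
      rw [hQfun]
      exact intervalIntegral.integral_hasDerivWithinAt_right (t := Ioi 0) (hint2q 0 le_rfl)
        ((hcq.mono Ioi_subset_Ici_self).stronglyMeasurableAtFilter_nhdsWithin
          measurableSet_Ioi 0)
        ((hcq 0 (by simp)).mono Ioi_subset_Ici_self)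
    · rw [hQfun]
      have hca : ContinuousAt (fun t => 2 * q t) x :=
        hcq.continuousAt (Ici_mem_nhds h0)
      exact (intervalIntegral.integral_hasDerivAt_right (hint2q x h0.le)
        (ContinuousOn.stronglyMeasurableAtFilter isOpen_Ioi
          (hcq.mono Ioi_subset_Ici_self) x h0)
        hca).hasDerivWithinAt
  have hQcont : ContinuousOn Q (Ici 0) := fun x hx => (hQd x hx).continuousWithinAt
  have hηcont : ContinuousOn η (Ici 0) := fun x hx => (hη' x hx).continuousWithinAt
  have hη'cont : ContinuousOn η' (Ici 0) := fun x hx => (hη'' x hx).continuousWithinAt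
  set f : ℝ → ℝ := fun z => η z * Real.exp (-(Q z)) with hf
  have hfcont : ContinuousOn f (Ici 0) :=
    hηcont.mul ((hQcont.neg).rexp)
  -- f nonneg on Ici 0
  have hfnn : ∀ x ∈ Ici (0:ℝ), 0 ≤ f x := by
    intro x hx
    have hηnn : 0 ≤ η x := by
      rcases eq_or_lt_of_le (mem_Ici.mp hx) with h0 | h0
      · simp [← h0, hη0]
      · have := hmono (self_mem_Ici) hx h0
        simpa [hη0] using this.le
    exact mul_nonneg hηnn (Real.exp_pos _).le
  -- G and its derivative
  set G : ℝ → ℝ := fun x => (1/2) * η' x * Real.exp (-(Q x)) with hG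
  have hGd : ∀ x ∈ Ici (0:ℝ), HasDerivWithinAt G (-lam * f x) (Ici 0) x := by
    intro x hx
    have h1 : HasDerivWithinAt (fun y => (1/2) * η' y) ((1/2) * η'' x) (Ici 0) x :=
      (hη'' x hx).const_mul _
    have h2 : HasDerivWithinAt (fun y => Real.exp (-(Q y)))
        (Real.exp (-(Q x)) * (-(2 * q x))) (Ici 0) x := (hQd x hx).neg.exp
    have := h1.mul h2
    refine this.congr_deriv ?_
    have hodex := hode x (mem_Ici.mp hx)
    simp only [hf]
    linear_combination (Real.exp (-(Q x))) * hodex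
  have hQ0 : Q 0 = 0 := by simp [hQ 0]
  have hG0 : G 0 = 1/2 := by simp [hG, hη'0, hQ0]
  -- η' nonneg
  have hη'nn : ∀ x ∈ Ici (0:ℝ), 0 ≤ η' x := by
    intro b hb
    have hd : HasDerivWithinAt η (η' b) (Ici b) b :=
      (hη' b hb).mono (Ici_subset_Ici.mpr (mem_Ici.mp hb))
    rw [hasDerivWithinAt_iff_tendsto_slope] at hd
    rw [Ici_sdiff_left] at hd
    refine ge_of_tendsto hd ?_
    filter_upwards [self_mem_nhdsWithin] with y hy
    have hyb : b < y := hy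
    have : η b < η y := hmono hb (le_trans (mem_Ici.mp hb) hyb.le) hyb
    have : 0 ≤ η y - η b := by linarith
    rw [slope_def_field]
    exact div_nonneg this (by linarith)
  have hGnn : ∀ x ∈ Ici (0:ℝ), 0 ≤ G x := by
    intro x hx
    exact mul_nonneg (mul_nonneg (by norm_num) (hη'nn x hx)) (Real.exp_pos _).le
  -- FTC on [0, b]
  have key : ∀ b : ℝ, 0 ≤ b → ∫ x in (0:ℝ)..b, f x ≤ 1 / (2 * lam) := by
    intro b hb
    have hIcc : Icc (0:ℝ) b ⊆ Ici 0 := Icc_subset_Ici_self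
    have hcontG : ContinuousOn G (Icc 0 b) :=
      fun x hx => ((hGd x (hIcc hx)).continuousWithinAt).mono hIcc
    have hderiv : ∀ x ∈ Ioo (0:ℝ) b, HasDerivWithinAt G (-lam * f x) (Ioi x) x := by
      intro x hx
      exact (hGd x (le_of_lt hx.1)).mono (Ioi_subset_Ici (le_of_lt hx.1))
    have hintf : IntervalIntegrable (fun x => -lam * f x) volume 0 b := by
      apply ContinuousOn.intervalIntegrable
      refine ((hfcont.const_smul (-lam)).mono ?_)
      rw [uIcc_of_le hb]
      exact Icc_subset_Ici_self
    have heq := intervalIntegral.integral_eq_sub_of_hasDeriv_right_of_le hb hcontG hderiv hintf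
    rw [intervalIntegral.integral_const_mul] at heq
    have hGb := hGnn b hb
    have : ∫ x in (0:ℝ)..b, f x = (G 0 - G b) / lam := by
      field_simp at heq ⊢
      linarith
    rw [this, hG0]
    rw [div_le_div_iff₀ hlam (by positivity)]
    nlinarith
  have hnorm : ∀ b : ℝ, 0 ≤ b →
      (∫ x in (0:ℝ)..b, ‖f x‖) = ∫ x in (0:ℝ)..b, f x := by
    intro b hb
    apply intervalIntegral.integral_congr
    intro x hx
    rw [uIcc_of_le hb] at hx
    exact Real.norm_of_nonneg (hfnn x (Icc_subset_Ici_self hx))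
  have hfi : ∀ i : ℝ, IntegrableOn f (Ioc 0 i) := by
    intro i
    rcases le_or_gt i 0 with hi | hi
    · rw [Ioc_eq_empty (by exact not_lt.mpr hi)]
      exact integrableOn_empty
    · exact ((hfcont.mono (by rw [uIcc_of_le hi.le]; exact Icc_subset_Ici_self)).intervalIntegrable).1
  have hintegrable : IntegrableOn f (Ioi 0) := by
    refine integrableOn_Ioi_of_intervalIntegral_norm_bounded (1 / (2 * lam)) 0 hfi
      (Filter.tendsto_id (α := ℝ)) ?_
    filter_upwards [Filter.eventually_ge_atTop (0:ℝ)] with i hi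
    rw [hnorm i hi]
    exact key i hi
  constructor
  · exact hintegrable
  · have htend := intervalIntegral_tendsto_integral_Ioi 0 hintegrable
      (Filter.tendsto_id (α := ℝ))
    refine le_of_tendsto htend ?_
    filter_upwards [Filter.eventually_ge_atTop (0:ℝ)] with i hi
    exact key i hi
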